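/- arXiv:1901.00882 — 2 statements merged into one kernel-verified Lean document; each statement's English description precedes it below -/
import Mathlib

section
/- Let A, B be formal variables (elements of a commutative ℚ-algebra) and set D_{i,j} := -∑_{k=0}^{i}(-2)^{-(i+j-k+1)}C(i+j-k,j)B_k - ∑_{k=0}^{j}(-2)^{-(i+j-k+1)}C(i+j-k,i)A_k. Then the 'weighted lattice path' representation holds: D_{i,j} = ∑_{γ ∈ W(i,j)} (-2)^{-l(γ)} F(γ_end), where W(i,j) is the set of down/left lattice paths from (i,j) ending at a boundary site (first coordinate 0 or second coordinate 0), l(γ) is the number of steps, F(0,k) = (1/2)A_k, F(k,0) = (1/2)B_k for k ≥ 1 and F(0,0) = (1/2)(A_0 + B_0). -/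
/-- A single lattice step: down or to the left (source on the left of the relation). -/
def stepRel (a b : ℕ × ℕ) : Prop :=
  (a.1 = b.1 + 1 ∧ a.2 = b.2) ∨ (a.1 = b.1 ∧ a.2 = b.2 + 1)

/-- `γ` is a down/left lattice path starting at `(i,j)` and ending at a boundary site
(first or second coordinate equal to `0`). -/
def IsPathW (i j : ℕ) (γ : List (ℕ × ℕ)) : Prop :=
  γ.Chain' stepRel ∧ γ.head? = some (i, j) ∧
    ∃ p : ℕ × ℕ, γ.getLast? = some p ∧ (p.1 = 0 ∨ p.2 = 0)

lemma isPathW_iff (i j : ℕ) (γ : List (ℕ × ℕ)) :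
    IsPathW i j γ ↔ (γ = [(i, j)] ∧ (i = 0 ∨ j = 0)) ∨
      (∃ γ', γ = (i, j) :: γ' ∧
        ((∃ i', i = i' + 1 ∧ IsPathW i' j γ') ∨ (∃ j', j = j' + 1 ∧ IsPathW i j' γ'))) := by
  constructor
  · rintro ⟨hc, hh, p, hl, hb⟩
    match γ, hh with
    | (a :: γ'), hh =>
      simp only [List.head?_cons, Option.some.injEq] at hh
      subst hh
      match γ' with
      | [] =>
        left
        refine ⟨rfl, ?_⟩
        simp only [List.getLast?_singleton, Option.some.injEq] at hl
        subst hl; exact hb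
      | (q :: rest) =>
        right
        rw [List.Chain', List.isChain_cons_cons] at hc
        obtain ⟨hstep, hc'⟩ := hc
        rw [List.getLast?_cons_cons] at hl
        refine ⟨q :: rest, rfl, ?_⟩
        rcases hstep with ⟨h1, h2⟩ | ⟨h1, h2⟩
        · left
          refine ⟨q.1, h1, hc', ?_, p, hl, hb⟩
          simp only [List.head?_cons, Option.some.injEq]
          exact Prod.ext_iff.2 ⟨rfl, h2.symm⟩
        · right
          refine ⟨q.2, h2, hc', ?_, p, hl, hb⟩
          simp only [List.head?_cons, Option.some.injEq]
          exact Prod.ext_iff.2 ⟨h1.symm, rfl⟩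
    | [], hh => simp at hh
  · rintro (⟨rfl, hb⟩ | ⟨γ', rfl, h⟩)
    · exact ⟨List.isChain_singleton _, rfl, (i, j), rfl, hb⟩
    · have hkey : ∀ i' j', IsPathW i' j' γ' → stepRel (i, j) (i', j') →
          IsPathW i j ((i, j) :: γ') := by
        rintro i' j' ⟨hc, hh, p, hl, hb⟩ hs
        have hne : γ' ≠ [] := by rintro rfl; simp at hh
        refine ⟨List.isChain_cons.2 ⟨?_, hc⟩, rfl, p, ?_, hb⟩
        · intro y hy
          rw [hh] at hy
          simp only [Option.mem_def, Option.some.injEq] at hy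
          subst hy; exact hs
        · match γ', hne with
          | (q :: rest), _ => rw [List.getLast?_cons_cons]; exact hl
      rcases h with ⟨i', rfl, h⟩ | ⟨j', rfl, h⟩
      · exact hkey i' j h (Or.inl ⟨rfl, rfl⟩)
      · exact hkey i j' h (Or.inr ⟨rfl, rfl⟩)

def pathsW : ℕ → ℕ → Finset (List (ℕ × ℕ))
  | 0, 0 => {[(0, 0)]}
  | (i + 1), 0 => insert [(i + 1, 0)] ((pathsW i 0).image (List.cons (i + 1, 0)))
  | 0, (j + 1) => insert [(0, j + 1)] ((pathsW 0 j).image (List.cons (0, j + 1)))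
  | (i + 1), (j + 1) =>
      ((pathsW i (j + 1)) ∪ (pathsW (i + 1) j)).image (List.cons (i + 1, j + 1))

lemma mem_pathsW : ∀ (i j : ℕ) (γ : List (ℕ × ℕ)), γ ∈ pathsW i j ↔ IsPathW i j γ
  | 0, 0, γ => by
    rw [pathsW, isPathW_iff]
    simp
  | (i + 1), 0, γ => by
    rw [pathsW, isPathW_iff]
    simp only [Finset.mem_insert, Finset.mem_image]
    constructor
    · rintro (rfl | ⟨γ', hγ', rfl⟩)
      · exact Or.inl ⟨rfl, by simp⟩
      · exact Or.inr ⟨γ', rfl, Or.inl ⟨i, rfl, (mem_pathsW i 0 γ').1 hγ'⟩⟩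
    · rintro (⟨rfl, _⟩ | ⟨γ', rfl, ⟨i', hi, h⟩ | ⟨j', hj, h⟩⟩)
      · exact Or.inl rfl
      · rw [show i' = i by omega] at h
        exact Or.inr ⟨γ', (mem_pathsW i 0 γ').2 h, rfl⟩
      · omega
  | 0, (j + 1), γ => by
    rw [pathsW, isPathW_iff]
    simp only [Finset.mem_insert, Finset.mem_image]
    constructor
    · rintro (rfl | ⟨γ', hγ', rfl⟩)
      · exact Or.inl ⟨rfl, by simp⟩
      · exact Or.inr ⟨γ', rfl, Or.inr ⟨j, rfl, (mem_pathsW 0 j γ').1 hγ'⟩⟩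
    · rintro (⟨rfl, _⟩ | ⟨γ', rfl, ⟨i', hi, h⟩ | ⟨j', hj, h⟩⟩)
      · exact Or.inl rfl
      · omega
      · rw [show j' = j by omega] at h
        exact Or.inr ⟨γ', (mem_pathsW 0 j γ').2 h, rfl⟩
  | (i + 1), (j + 1), γ => by
    rw [pathsW, isPathW_iff]
    simp only [Finset.mem_image, Finset.mem_union]
    constructor
    · rintro ⟨γ', (h | h), rfl⟩
      · exact Or.inr ⟨γ', rfl, Or.inl ⟨i, rfl, (mem_pathsW i (j + 1) γ').1 h⟩⟩
      · exact Or.inr ⟨γ', rfl, Or.inr ⟨j, rfl, (mem_pathsW (i + 1) j γ').1 h⟩⟩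
    · rintro (⟨_, h⟩ | ⟨γ', rfl, ⟨i', hi, h⟩ | ⟨j', hj, h⟩⟩)
      · omega
      · rw [show i' = i by omega] at h
        exact ⟨γ', Or.inl ((mem_pathsW i (j + 1) γ').2 h), rfl⟩
      · rw [show j' = j by omega] at h
        exact ⟨γ', Or.inr ((mem_pathsW (i + 1) j γ').2 h), rfl⟩
  termination_by i j => i + j

lemma head?_of_mem_pathsW {i j : ℕ} {γ : List (ℕ × ℕ)} (h : γ ∈ pathsW i j) :
    γ.head? = some (i, j) := ((mem_pathsW i j γ).1 h).2.1

lemma ne_nil_of_mem_pathsW {i j : ℕ} {γ : List (ℕ × ℕ)} (h : γ ∈ pathsW i j) :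
    γ ≠ [] := by
  intro hnil
  have := head?_of_mem_pathsW h
  rw [hnil] at this
  simp at this

section

variable {V : Type*} [AddCommGroup V] [Module ℚ V]

/-- weight of a path -/
def wF (F : ℕ × ℕ → V) (γ : List (ℕ × ℕ)) : V :=
  ((-2 : ℚ) ^ (-((γ.length : ℤ) - 1))) • F (γ.getLast?.getD (0, 0))

lemma wF_single (F : ℕ × ℕ → V) (p : ℕ × ℕ) : wF F [p] = F p := by
  simp [wF]

lemma wF_cons (F : ℕ × ℕ → V) (p q : ℕ × ℕ) (rest : List (ℕ × ℕ)) :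
    wF F (p :: q :: rest) = (-(1 : ℚ)/2) • wF F (q :: rest) := by
  rw [wF, wF, List.getLast?_cons_cons, smul_smul]
  congr 1
  have hne : (-2 : ℚ) ≠ 0 := by norm_num
  rw [show (-(((p :: q :: rest).length : ℤ) - 1)) =
      (-1) + (-(((q :: rest).length : ℤ) - 1)) by push_cast [List.length_cons]; ring,
    zpow_add₀ hne]
  norm_num

lemma sum_image_cons (F : ℕ × ℕ → V) (p : ℕ × ℕ) (s : Finset (List (ℕ × ℕ)))
    (hs : ∀ γ ∈ s, γ ≠ []) :
    ∑ γ ∈ s.image (List.cons p), wF F γ = (-(1 : ℚ)/2) • ∑ γ ∈ s, wF F γ := by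
  rw [Finset.sum_image (fun x _ y _ h => (List.cons.injEq p x p y ▸ congrArg id h : p :: x = p :: y) |> fun h' => by
      injection h')]
  rw [Finset.smul_sum]
  apply Finset.sum_congr rfl
  intro γ hγ
  obtain ⟨q, rest, rfl⟩ := List.exists_cons_of_ne_nil (hs γ hγ)
  exact wF_cons F p q rest

/-- total weight -/
def Tv (F : ℕ × ℕ → V) (i j : ℕ) : V := ∑ γ ∈ pathsW i j, wF F γ

lemma Tv_zero_zero (F : ℕ × ℕ → V) : Tv F 0 0 = F (0, 0) := by
  rw [Tv, pathsW]
  simp [wF_single]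

lemma Tv_succ_zero (F : ℕ × ℕ → V) (i : ℕ) :
    Tv F (i + 1) 0 = F (i + 1, 0) + (-(1 : ℚ)/2) • Tv F i 0 := by
  rw [Tv, pathsW, Finset.sum_insert, wF_single,
    sum_image_cons F _ _ (fun γ hγ => ne_nil_of_mem_pathsW hγ), Tv]
  intro h
  obtain ⟨γ', hγ', heq⟩ := Finset.mem_image.1 h
  exact ne_nil_of_mem_pathsW hγ' (by injection heq)

lemma Tv_zero_succ (F : ℕ × ℕ → V) (j : ℕ) :
    Tv F 0 (j + 1) = F (0, j + 1) + (-(1 : ℚ)/2) • Tv F 0 j := by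
  rw [Tv, pathsW, Finset.sum_insert, wF_single,
    sum_image_cons F _ _ (fun γ hγ => ne_nil_of_mem_pathsW hγ), Tv]
  intro h
  obtain ⟨γ', hγ', heq⟩ := Finset.mem_image.1 h
  exact ne_nil_of_mem_pathsW hγ' (by injection heq)

lemma Tv_succ_succ (F : ℕ × ℕ → V) (i j : ℕ) :
    Tv F (i + 1) (j + 1) = (-(1 : ℚ)/2) • (Tv F i (j + 1) + Tv F (i + 1) j) := by
  have hdisj : Disjoint (pathsW i (j + 1)) (pathsW (i + 1) j) := by
    rw [Finset.disjoint_left]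
    intro γ h1 h2
    have e1 := head?_of_mem_pathsW h1
    have e2 := head?_of_mem_pathsW h2
    rw [e1] at e2
    simp [Prod.ext_iff] at e2
  rw [Tv, pathsW,
    sum_image_cons F _ _ (fun γ hγ => by
      rcases Finset.mem_union.1 hγ with h | h
      · exact ne_nil_of_mem_pathsW h
      · exact ne_nil_of_mem_pathsW h),
    Finset.sum_union hdisj, Tv, Tv]


end

def cB (i j k : ℕ) : ℚ :=
  (-2 : ℚ) ^ (-((i : ℤ) + j - k + 1)) * (Nat.choose (i + j - k) j : ℚ)

def cA (i j k : ℕ) : ℚ :=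
  (-2 : ℚ) ^ (-((i : ℤ) + j - k + 1)) * (Nat.choose (i + j - k) i : ℚ)

lemma negtwo_zpow_natneg (n : ℕ) : (-2 : ℚ) ^ (-(n : ℤ)) = ((-2 : ℚ) ^ n)⁻¹ := by
  rw [zpow_neg, zpow_natCast]

lemma cB_rec (i j k : ℕ) (hk : k ≤ i) :
    cB (i + 1) (j + 1) k = (-(1 : ℚ)/2) * cB i (j + 1) k + (-(1 : ℚ)/2) * cB (i + 1) j k := by
  have h1 : i + 1 + (j + 1) - k = (i + 1 + j - k) + 1 := by omega
  have h2 : i + (j + 1) - k = i + 1 + j - k := by omega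
  simp only [cB, h1, h2, Nat.choose_succ_succ, Nat.succ_eq_add_one]
  rw [show (-(((i + 1 : ℕ) : ℤ) + ((j + 1 : ℕ) : ℤ) - (k : ℤ) + 1)) = -(((i + j - k + 2 + 1 : ℕ) : ℤ)) by push_cast; omega,
      show (-(((i : ℕ) : ℤ) + ((j + 1 : ℕ) : ℤ) - (k : ℤ) + 1)) = -(((i + j - k + 2 : ℕ) : ℤ)) by push_cast; omega,
      show (-(((i + 1 : ℕ) : ℤ) + ((j : ℕ) : ℤ) - (k : ℤ) + 1)) = -(((i + j - k + 2 : ℕ) : ℤ)) by push_cast; omega,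
      ]
  simp only [negtwo_zpow_natneg]
  rw [pow_succ]
  have hm : ((-2 : ℚ)) ^ (i + j - k + 2) ≠ 0 := pow_ne_zero _ (by norm_num)
  push_cast
  field_simp
  ring

lemma cB_last (i j : ℕ) :
    cB (i + 1) (j + 1) (i + 1) = (-(1 : ℚ)/2) * cB (i + 1) j (i + 1) := by
  simp only [cB]
  rw [show i + 1 + (j + 1) - (i + 1) = j + 1 by omega, show i + 1 + j - (i + 1) = j by omega,
      Nat.choose_self, Nat.choose_self,
      show (-(((i + 1 : ℕ) : ℤ) + ((j + 1 : ℕ) : ℤ) - ((i + 1 : ℕ) : ℤ) + 1)) = -(((j + 1 + 1 : ℕ) : ℤ)) by push_cast; omega,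
      show (-(((i + 1 : ℕ) : ℤ) + ((j : ℕ) : ℤ) - ((i + 1 : ℕ) : ℤ) + 1)) = -(((j + 1 : ℕ) : ℤ)) by push_cast; omega,
      ]
  simp only [negtwo_zpow_natneg]
  rw [pow_succ]
  have hm : ((-2 : ℚ)) ^ (j + 1) ≠ 0 := pow_ne_zero _ (by norm_num)
  field_simp

lemma cA_rec (i j k : ℕ) (hk : k ≤ j) :
    cA (i + 1) (j + 1) k = (-(1 : ℚ)/2) * cA i (j + 1) k + (-(1 : ℚ)/2) * cA (i + 1) j k := by
  have h1 : i + 1 + (j + 1) - k = (i + 1 + j - k) + 1 := by omega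
  have h2 : i + 1 + j - k = i + (j + 1) - k := by omega
  simp only [cA, h1, h2, Nat.choose_succ_succ, Nat.succ_eq_add_one]
  rw [show (-(((i + 1 : ℕ) : ℤ) + ((j + 1 : ℕ) : ℤ) - (k : ℤ) + 1)) = -(((i + j - k + 2 + 1 : ℕ) : ℤ)) by push_cast; omega,
      show (-(((i : ℕ) : ℤ) + ((j + 1 : ℕ) : ℤ) - (k : ℤ) + 1)) = -(((i + j - k + 2 : ℕ) : ℤ)) by push_cast; omega,
      show (-(((i + 1 : ℕ) : ℤ) + ((j : ℕ) : ℤ) - (k : ℤ) + 1)) = -(((i + j - k + 2 : ℕ) : ℤ)) by push_cast; omega,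
      ]
  simp only [negtwo_zpow_natneg]
  rw [pow_succ]
  have hm : ((-2 : ℚ)) ^ (i + j - k + 2) ≠ 0 := pow_ne_zero _ (by norm_num)
  push_cast
  field_simp
  ring

lemma cA_last (i j : ℕ) :
    cA (i + 1) (j + 1) (j + 1) = (-(1 : ℚ)/2) * cA i (j + 1) (j + 1) := by
  simp only [cA]
  rw [show i + 1 + (j + 1) - (j + 1) = i + 1 by omega, show i + (j + 1) - (j + 1) = i by omega,
      Nat.choose_self, Nat.choose_self,
      show (-(((i + 1 : ℕ) : ℤ) + ((j + 1 : ℕ) : ℤ) - ((j + 1 : ℕ) : ℤ) + 1)) = -(((i + 1 + 1 : ℕ) : ℤ)) by push_cast; omega,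
      show (-(((i : ℕ) : ℤ) + ((j + 1 : ℕ) : ℤ) - ((j + 1 : ℕ) : ℤ) + 1)) = -(((i + 1 : ℕ) : ℤ)) by push_cast; omega,
      ]
  simp only [negtwo_zpow_natneg]
  rw [pow_succ]
  have hm : ((-2 : ℚ)) ^ (i + 1) ≠ 0 := pow_ne_zero _ (by norm_num)
  field_simp

lemma cB0_rec (i k : ℕ) (hk : k ≤ i) : cB (i + 1) 0 k = (-(1 : ℚ)/2) * cB i 0 k := by
  simp only [cB, Nat.choose_zero_right, Nat.cast_one, mul_one]
  rw [show (-(((i + 1 : ℕ) : ℤ) + ((0 : ℕ) : ℤ) - (k : ℤ) + 1)) = -(((i - k + 1 + 1 : ℕ) : ℤ)) by push_cast; omega,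
      show (-(((i : ℕ) : ℤ) + ((0 : ℕ) : ℤ) - (k : ℤ) + 1)) = -(((i - k + 1 : ℕ) : ℤ)) by push_cast; omega,
      ]
  simp only [negtwo_zpow_natneg]
  rw [pow_succ]
  have hm : ((-2 : ℚ)) ^ (i - k + 1) ≠ 0 := pow_ne_zero _ (by norm_num)
  field_simp

lemma cB0_last (i : ℕ) : cB (i + 1) 0 (i + 1) = -(1 : ℚ)/2 := by
  simp only [cB]
  rw [show i + 1 + 0 - (i + 1) = 0 by omega, Nat.choose_zero_right,
      show (-(((i + 1 : ℕ) : ℤ) + ((0 : ℕ) : ℤ) - ((i + 1 : ℕ) : ℤ) + 1)) = -(((1 : ℕ) : ℤ)) by push_cast; omega,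
      negtwo_zpow_natneg]
  norm_num

lemma cA0_rec (i : ℕ) : cA (i + 1) 0 0 = (-(1 : ℚ)/2) * cA i 0 0 := by
  simp only [cA]
  rw [show i + 1 + 0 - 0 = i + 1 by omega, show i + 0 - 0 = i by omega,
      Nat.choose_self, Nat.choose_self,
      show (-(((i + 1 : ℕ) : ℤ) + ((0 : ℕ) : ℤ) - ((0 : ℕ) : ℤ) + 1)) = -(((i + 1 + 1 : ℕ) : ℤ)) by push_cast; omega,
      show (-(((i : ℕ) : ℤ) + ((0 : ℕ) : ℤ) - ((0 : ℕ) : ℤ) + 1)) = -(((i + 1 : ℕ) : ℤ)) by push_cast; omega,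
      ]
  simp only [negtwo_zpow_natneg]
  rw [pow_succ]
  have hm : ((-2 : ℚ)) ^ (i + 1) ≠ 0 := pow_ne_zero _ (by norm_num)
  field_simp

lemma cA0'_rec (j k : ℕ) (hk : k ≤ j) : cA 0 (j + 1) k = (-(1 : ℚ)/2) * cA 0 j k := by
  simp only [cA, Nat.choose_zero_right, Nat.cast_one, mul_one]
  rw [show (-(((0 : ℕ) : ℤ) + ((j + 1 : ℕ) : ℤ) - (k : ℤ) + 1)) = -(((j - k + 1 + 1 : ℕ) : ℤ)) by push_cast; omega,
      show (-(((0 : ℕ) : ℤ) + ((j : ℕ) : ℤ) - (k : ℤ) + 1)) = -(((j - k + 1 : ℕ) : ℤ)) by push_cast; omega,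
      ]
  simp only [negtwo_zpow_natneg]
  rw [pow_succ]
  have hm : ((-2 : ℚ)) ^ (j - k + 1) ≠ 0 := pow_ne_zero _ (by norm_num)
  field_simp

lemma cA0'_last (j : ℕ) : cA 0 (j + 1) (j + 1) = -(1 : ℚ)/2 := by
  simp only [cA]
  rw [show 0 + (j + 1) - (j + 1) = 0 by omega, Nat.choose_zero_right,
      show (-(((0 : ℕ) : ℤ) + ((j + 1 : ℕ) : ℤ) - ((j + 1 : ℕ) : ℤ) + 1)) = -(((1 : ℕ) : ℤ)) by push_cast; omega,
      negtwo_zpow_natneg]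
  norm_num

lemma cB0'_rec (j : ℕ) : cB 0 (j + 1) 0 = (-(1 : ℚ)/2) * cB 0 j 0 := by
  simp only [cB]
  rw [show 0 + (j + 1) - 0 = j + 1 by omega, show 0 + j - 0 = j by omega,
      Nat.choose_self, Nat.choose_self,
      show (-(((0 : ℕ) : ℤ) + ((j + 1 : ℕ) : ℤ) - ((0 : ℕ) : ℤ) + 1)) = -(((j + 1 + 1 : ℕ) : ℤ)) by push_cast; omega,
      show (-(((0 : ℕ) : ℤ) + ((j : ℕ) : ℤ) - ((0 : ℕ) : ℤ) + 1)) = -(((j + 1 : ℕ) : ℤ)) by push_cast; omega,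
      ]
  simp only [negtwo_zpow_natneg]
  rw [pow_succ]
  have hm : ((-2 : ℚ)) ^ (j + 1) ≠ 0 := pow_ne_zero _ (by norm_num)
  field_simp

lemma cB00 : cB 0 0 0 = -(1 : ℚ)/2 := by
  simp only [cB]
  norm_num

lemma cA00 : cA 0 0 0 = -(1 : ℚ)/2 := by
  simp only [cA]
  norm_num

section Main

variable {V : Type*} [AddCommGroup V] [Module ℚ V]

def Dv (A B : ℕ → V) (i j : ℕ) : V :=
  - ∑ k ∈ Finset.range (i + 1), cB i j k • B k - ∑ k ∈ Finset.range (j + 1), cA i j k • A k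

lemma Dv_zero_zero (A B : ℕ → V) : Dv A B 0 0 = (1/2 : ℚ) • A 0 + (1/2 : ℚ) • B 0 := by
  simp only [Dv, Finset.sum_range_succ, Finset.sum_range_zero, zero_add, cB00, cA00]
  module

lemma Dv_succ_zero (A B : ℕ → V) (i : ℕ) :
    Dv A B (i + 1) 0 = (1/2 : ℚ) • B (i + 1) + (-(1 : ℚ)/2) • Dv A B i 0 := by
  have e1 : ∑ k ∈ Finset.range (i + 1), cB (i + 1) 0 k • B k
      = (-(1 : ℚ)/2) • ∑ k ∈ Finset.range (i + 1), cB i 0 k • B k := by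
    rw [Finset.smul_sum]
    exact Finset.sum_congr rfl fun k hk => by
      rw [cB0_rec i k (Nat.lt_succ_iff.1 (Finset.mem_range.1 hk)), mul_smul]
  simp only [Dv]
  rw [Finset.sum_range_succ (fun k => cB (i + 1) 0 k • B k) (i + 1), e1, cB0_last]
  simp only [Finset.sum_range_succ, Finset.sum_range_zero, zero_add]
  rw [cA0_rec, mul_smul]
  module

lemma Dv_zero_succ (A B : ℕ → V) (j : ℕ) :
    Dv A B 0 (j + 1) = (1/2 : ℚ) • A (j + 1) + (-(1 : ℚ)/2) • Dv A B 0 j := by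
  have e1 : ∑ k ∈ Finset.range (j + 1), cA 0 (j + 1) k • A k
      = (-(1 : ℚ)/2) • ∑ k ∈ Finset.range (j + 1), cA 0 j k • A k := by
    rw [Finset.smul_sum]
    exact Finset.sum_congr rfl fun k hk => by
      rw [cA0'_rec j k (Nat.lt_succ_iff.1 (Finset.mem_range.1 hk)), mul_smul]
  simp only [Dv]
  rw [Finset.sum_range_succ (fun k => cA 0 (j + 1) k • A k) (j + 1), e1, cA0'_last]
  simp only [Finset.sum_range_succ, Finset.sum_range_zero, zero_add]
  rw [cB0'_rec, mul_smul]
  module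

lemma Dv_succ_succ (A B : ℕ → V) (i j : ℕ) :
    Dv A B (i + 1) (j + 1) = (-(1 : ℚ)/2) • (Dv A B i (j + 1) + Dv A B (i + 1) j) := by
  have eB : ∑ k ∈ Finset.range (i + 1), cB (i + 1) (j + 1) k • B k
      = (-(1 : ℚ)/2) • ∑ k ∈ Finset.range (i + 1), cB i (j + 1) k • B k
        + (-(1 : ℚ)/2) • ∑ k ∈ Finset.range (i + 1), cB (i + 1) j k • B k := by
    rw [Finset.smul_sum, Finset.smul_sum, ← Finset.sum_add_distrib]
    exact Finset.sum_congr rfl fun k hk => by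
      rw [cB_rec i j k (Nat.lt_succ_iff.1 (Finset.mem_range.1 hk)), add_smul, mul_smul, mul_smul]
  have eA : ∑ k ∈ Finset.range (j + 1), cA (i + 1) (j + 1) k • A k
      = (-(1 : ℚ)/2) • ∑ k ∈ Finset.range (j + 1), cA i (j + 1) k • A k
        + (-(1 : ℚ)/2) • ∑ k ∈ Finset.range (j + 1), cA (i + 1) j k • A k := by
    rw [Finset.smul_sum, Finset.smul_sum, ← Finset.sum_add_distrib]
    exact Finset.sum_congr rfl fun k hk => by
      rw [cA_rec i j k (Nat.lt_succ_iff.1 (Finset.mem_range.1 hk)), add_smul, mul_smul, mul_smul]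
  simp only [Dv]
  rw [Finset.sum_range_succ (fun k => cB (i + 1) (j + 1) k • B k) (i + 1),
      Finset.sum_range_succ (fun k => cA (i + 1) (j + 1) k • A k) (j + 1),
      Finset.sum_range_succ (fun k => cB (i + 1) j k • B k) (i + 1),
      Finset.sum_range_succ (fun k => cA i (j + 1) k • A k) (j + 1),
      eB, eA, cB_last, cA_last, mul_smul, mul_smul]
  module

lemma Tv_eq_Dv (A B : ℕ → V) (F : ℕ × ℕ → V)
    (hF0k : ∀ k, 1 ≤ k → F (0, k) = (1 / 2 : ℚ) • A k)
    (hFk0 : ∀ k, 1 ≤ k → F (k, 0) = (1 / 2 : ℚ) • B k)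
    (hF00 : F (0, 0) = (1 / 2 : ℚ) • (A 0 + B 0)) :
    ∀ i j, Tv F i j = Dv A B i j
  | 0, 0 => by rw [Tv_zero_zero, Dv_zero_zero, hF00, smul_add]
  | (i + 1), 0 => by
      rw [Tv_succ_zero, Tv_eq_Dv A B F hF0k hFk0 hF00 i 0, Dv_succ_zero,
        hFk0 (i + 1) (by omega)]
  | 0, (j + 1) => by
      rw [Tv_zero_succ, Tv_eq_Dv A B F hF0k hFk0 hF00 0 j, Dv_zero_succ,
        hF0k (j + 1) (by omega)]
  | (i + 1), (j + 1) => by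
      rw [Tv_succ_succ, Tv_eq_Dv A B F hF0k hFk0 hF00 i (j + 1),
        Tv_eq_Dv A B F hF0k hFk0 hF00 (i + 1) j, Dv_succ_succ]
  termination_by i j => i + j

end Main

/-- Weighted lattice-path representation: with
`D_{i,j} = -∑_{k=0}^{i} (-2)^{-(i+j-k+1)} C(i+j-k,j) B_k - ∑_{k=0}^{j} (-2)^{-(i+j-k+1)} C(i+j-k,i) A_k`,
one has `D_{i,j} = ∑_{γ ∈ W(i,j)} (-2)^{-l(γ)} F(γ_end)` where `l(γ)` is the number of
steps of `γ`, `F(0,k) = (1/2)A_k`, `F(k,0) = (1/2)B_k` for `k ≥ 1`, and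
`F(0,0) = (1/2)(A_0 + B_0)`. -/
theorem stmt_13 {V : Type*} [AddCommGroup V] [Module ℚ V]
    (A B : ℕ → V) (F : ℕ × ℕ → V)
    (hF0k : ∀ k, 1 ≤ k → F (0, k) = (1 / 2 : ℚ) • A k)
    (hFk0 : ∀ k, 1 ≤ k → F (k, 0) = (1 / 2 : ℚ) • B k)
    (hF00 : F (0, 0) = (1 / 2 : ℚ) • (A 0 + B 0))
    (D : ℕ → ℕ → V)
    (hD : ∀ i j, D i j =
      - ∑ k ∈ Finset.range (i + 1),
          (((-2 : ℚ) ^ (-((i : ℤ) + j - k + 1)) * (Nat.choose (i + j - k) j : ℚ)) • B k)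
      - ∑ k ∈ Finset.range (j + 1),
          (((-2 : ℚ) ^ (-((i : ℤ) + j - k + 1)) * (Nat.choose (i + j - k) i : ℚ)) • A k)) :
    ∀ i j, D i j =
      ∑ᶠ γ : {γ : List (ℕ × ℕ) // IsPathW i j γ},
        ((-2 : ℚ) ^ (-((γ.1.length : ℤ) - 1))) • F (γ.1.getLast?.getD (0, 0)) := by
  intro i j
  have hset : {γ : List (ℕ × ℕ) | IsPathW i j γ} = ↑(pathsW i j) := by
    ext γ
    simp [mem_pathsW]
  have h1 : (∑ᶠ γ : {γ : List (ℕ × ℕ) // IsPathW i j γ},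
      ((-2 : ℚ) ^ (-((γ.1.length : ℤ) - 1))) • F (γ.1.getLast?.getD (0, 0))) = Tv F i j := by
    calc (∑ᶠ γ : {γ : List (ℕ × ℕ) // IsPathW i j γ}, wF F γ.1)
        = ∑ᶠ γ ∈ {γ : List (ℕ × ℕ) | IsPathW i j γ}, wF F γ :=
          finsum_subtype_eq_finsum_cond (IsPathW i j)
      _ = ∑ γ ∈ pathsW i j, wF F γ := by rw [hset, finsum_mem_coe_finset]
      _ = Tv F i j := rfl
  rw [hD i j, h1, Tv_eq_Dv A B F hF0k hFk0 hF00 i j]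
  rfl
end

section
/- For nonnegative integers n₁, n₂, n₃ with even sum, ∫_ℝ ∏_{j=1}^{3} H_{n_j}(x/√(2t)) · G(t,x)³ dx = (2^{-(n₁+n₂+n₃)/2} / (3^{1/2} 4πt)) ∑_{r₁,r₂,r₃ : r₁+r₂+r₃ ≤ (n₁+n₂+n₃)/2} [∏_{j=1}^{3} (-1)^{r_j} 3^{r_j - n_j/2} n_j!/(r_j!(n_j - 2r_j)!)] · (∑_j (n_j - 2r_j))! / (∑_j (n_j/2 - r_j))!, for every t > 0. -/
open MeasureTheory Real

/-- The 1d heat kernel, extended by zero for nonpositive times. -/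
noncomputable def heatK (t x : ℝ) : ℝ :=
  if 0 < t then (Real.sqrt (4 * Real.pi * t))⁻¹ * Real.exp (-x ^ 2 / (4 * t)) else 0

/-- Space-time convolution `(F * H)(t,x) = ∫∫ F(t-s, x-y) H(s,y) dy ds`. -/
noncomputable def stConv (F H : ℝ → ℝ → ℝ) : ℝ → ℝ → ℝ :=
  fun t x => ∫ p : ℝ × ℝ, F (t - p.1) (x - p.2) * H p.1 p.2

section aux
open Set Polynomial
open scoped Nat

-- x^k ≤ k! * exp x for x ≥ 0
private lemma pow_le_fact_mul_exp (k : ℕ) {x : ℝ} (hx : 0 ≤ x) :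
    x ^ k ≤ k.factorial * Real.exp x := by
  have hk : (0:ℝ) < k.factorial := by positivity
  rw [← div_le_iff₀' hk]
  calc x ^ k / k.factorial ≤ ∑ i ∈ Finset.range (k+1), x ^ i / i.factorial :=
        Finset.single_le_sum (f := fun i => x ^ i / i.factorial)
          (fun i _ => by positivity) (Finset.self_mem_range_succ k)
    _ ≤ Real.exp x := Real.sum_le_exp_of_nonneg hx (k+1)

private lemma integrable_pow_mul_exp {b : ℝ} (hb : 0 < b) (k : ℕ) :
    Integrable (fun x : ℝ => x ^ k * Real.exp (-b * x ^ 2)) := by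
  have hb2 : 0 < b / 2 := by linarith
  refine Integrable.mono' ((integrable_exp_neg_mul_sq hb2).const_mul
      (1 + k.factorial * (2 / b) ^ k)) (Continuous.aestronglyMeasurable (by continuity)) ?_
  filter_upwards with x
  have hx2 : (0:ℝ) ≤ x ^ 2 := sq_nonneg x
  have h0 : Real.exp (-b * x ^ 2) ≤ Real.exp (-(b/2) * x ^ 2) := by
    apply Real.exp_le_exp.2; nlinarith
  have hev : x ^ (2 * k) = (x ^ 2) ^ k := by rw [pow_mul]
  have h2 : (x ^ 2) ^ k * Real.exp (-b * x ^ 2)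
      ≤ k.factorial * (2 / b) ^ k * Real.exp (-(b/2) * x ^ 2) := by
    have h3 : ((b/2) * x ^ 2) ^ k ≤ k.factorial * Real.exp ((b/2) * x ^ 2) :=
      pow_le_fact_mul_exp k (by positivity)
    have h4 : (x ^ 2) ^ k ≤ k.factorial * (2 / b) ^ k * Real.exp ((b/2) * x ^ 2) := by
      have hbk : (0:ℝ) < (b/2) ^ k := by positivity
      rw [mul_pow] at h3
      calc (x ^ 2) ^ k = ((b/2) ^ k * (x ^ 2) ^ k) / (b/2) ^ k := by field_simp
        _ ≤ (k.factorial * Real.exp ((b/2) * x ^ 2)) / (b/2) ^ k := by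
            gcongr
        _ = k.factorial * (2 / b) ^ k * Real.exp ((b/2) * x ^ 2) := by
            rw [div_eq_mul_inv, ← inv_pow, inv_div]; ring
    calc (x ^ 2) ^ k * Real.exp (-b * x ^ 2)
        ≤ (k.factorial * (2 / b) ^ k * Real.exp ((b/2) * x ^ 2)) * Real.exp (-b * x ^ 2) := by
          apply mul_le_mul_of_nonneg_right h4 (Real.exp_pos _).le
      _ = k.factorial * (2 / b) ^ k * Real.exp (-(b/2) * x ^ 2) := by
          rw [mul_assoc, ← Real.exp_add]; ring_nf
  have habs : |x| ^ k ≤ 1 + (x ^ 2) ^ k := by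
    rcases le_total (|x|) 1 with h | h
    · have := pow_le_one₀ (abs_nonneg x) h (n := k)
      nlinarith [pow_nonneg (sq_nonneg x) k]
    · have h5 : |x| ^ k ≤ |x| ^ (2 * k) := pow_le_pow_right₀ h (by omega)
      have h6 : |x| ^ (2 * k) = (x ^ 2) ^ k := by rw [pow_mul, sq_abs]
      nlinarith [h5, h6]
  have : ‖x ^ k * Real.exp (-b * x ^ 2)‖ = |x| ^ k * Real.exp (-b * x ^ 2) := by
    rw [norm_mul, Real.norm_eq_abs, Real.norm_eq_abs, abs_pow,
      abs_of_pos (Real.exp_pos _)]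
  rw [this]
  calc |x| ^ k * Real.exp (-b * x ^ 2)
      ≤ (1 + (x ^ 2) ^ k) * Real.exp (-b * x ^ 2) :=
        mul_le_mul_of_nonneg_right habs (Real.exp_pos _).le
    _ = Real.exp (-b * x ^ 2) + (x ^ 2) ^ k * Real.exp (-b * x ^ 2) := by ring
    _ ≤ Real.exp (-(b/2) * x ^ 2) + k.factorial * (2 / b) ^ k * Real.exp (-(b/2) * x ^ 2) := by
        exact add_le_add h0 h2
    _ = (1 + k.factorial * (2 / b) ^ k) * Real.exp (-(b/2) * x ^ 2) := by ring

private lemma Gamma_nat_add_half (k : ℕ) :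
    Real.Gamma ((k : ℝ) + 1 / 2) = (2 * k).factorial / (4 ^ k * k.factorial) * Real.sqrt π := by
  induction k with
  | zero => norm_num [Real.Gamma_one_half_eq]
  | succ k ih =>
    have h : ((k + 1 : ℕ) : ℝ) + 1 / 2 = ((k : ℝ) + 1 / 2) + 1 := by push_cast; ring
    rw [h, Real.Gamma_add_one (by positivity), ih]
    have e1 : ((2 * (k + 1)).factorial : ℝ)
        = (2 * k + 2) * ((2 * k + 1) * (2 * k).factorial) := by
      rw [show 2 * (k + 1) = (2 * k + 1) + 1 by ring, Nat.factorial_succ, Nat.factorial_succ]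
      push_cast; ring
    have e2 : ((k + 1).factorial : ℝ) = (k + 1) * k.factorial := by
      rw [Nat.factorial_succ]; push_cast; ring
    have hk : ((k.factorial : ℝ)) ≠ 0 := by positivity
    have hk1 : (((k+1).factorial : ℝ)) ≠ 0 := by positivity
    rw [e1, e2]
    field_simp
    ring

private lemma integral_pow_mul_exp {b : ℝ} (hb : 0 < b) (k : ℕ) :
    ∫ x : ℝ, x ^ (2 * k) * Real.exp (-b * x ^ 2)
      = (2 * k).factorial / (k.factorial * (4 * b) ^ k) * Real.sqrt (π / b) := by
  have h1 : ∫ x : ℝ, x ^ (2 * k) * Real.exp (-b * x ^ 2)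
      = 2 * ∫ x in Ioi (0:ℝ), x ^ (2 * k) * Real.exp (-b * x ^ 2) := by
    rw [← integral_comp_abs (f := fun x => x ^ (2 * k) * Real.exp (-b * x ^ 2))]
    congr 1
    funext x
    rw [pow_mul, pow_mul, sq_abs]
  have h2 : ∫ x in Ioi (0:ℝ), x ^ (2 * k) * Real.exp (-b * x ^ 2)
      = b ^ (-(((2 * k : ℕ) : ℝ) + 1) / 2) * (1 / 2) *
        Real.Gamma ((((2 * k : ℕ) : ℝ) + 1) / 2) := by
    rw [← integral_rpow_mul_exp_neg_mul_rpow two_pos (by have : (0:ℝ) ≤ (k:ℝ) := Nat.cast_nonneg k; linarith) hb]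
    refine setIntegral_congr_fun measurableSet_Ioi (fun x hx => ?_)
    rw [← Real.rpow_natCast x (2 * k)]
    norm_num
  rw [h1, h2]
  have hq1 : (-(((2 * k : ℕ) : ℝ) + 1) / 2) = -((k : ℝ) + 1 / 2) := by push_cast; ring
  have hq2 : ((((2 * k : ℕ) : ℝ) + 1) / 2) = (k : ℝ) + 1 / 2 := by push_cast; ring
  rw [hq1, hq2, _root_.Gamma_nat_add_half, Real.rpow_neg hb.le, Real.rpow_add hb,
    Real.rpow_natCast, show b ^ ((1:ℝ)/2) = Real.sqrt b from (Real.sqrt_eq_rpow b).symm,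
    Real.sqrt_div pi_pos.le b]
  have hsb : (0:ℝ) < Real.sqrt b := Real.sqrt_pos.2 hb
  have hsp : (0:ℝ) < Real.sqrt π := Real.sqrt_pos.2 pi_pos
  have hbk : (0:ℝ) < b ^ k := by positivity
  have h4 : ((4 * b : ℝ)) ^ k = 4 ^ k * b ^ k := by rw [mul_pow]
  rw [h4]
  have hfk : (0:ℝ) < (k.factorial : ℝ) := by positivity
  field_simp

private lemma two_pow_mul_fact_mul_doubleFact (r : ℕ) :
    (2 * r).factorial = 2 ^ r * r.factorial * (2 * r - 1)‼ := by
  cases r with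
  | zero => rfl
  | succ r =>
    rw [show 2 * (r + 1) = (2 * r + 1) + 1 by ring, Nat.factorial_eq_mul_doubleFactorial,
      show 2 * r + 1 + 1 = 2 * (r + 1) by ring, Nat.doubleFactorial_two_mul,
      show 2 * (r + 1) - 1 = 2 * r + 1 by omega]

private lemma coeff_hermite_real (n r : ℕ) (hr : 2 * r ≤ n) :
    ((Polynomial.coeff (Polynomial.hermite n) (n - 2 * r) : ℤ) : ℝ)
      = (-1 : ℝ) ^ r * n.factorial / (r.factorial * (n - 2 * r).factorial * 2 ^ r) := by
  have h1 : n = 2 * r + (n - 2 * r) := by omega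
  rw [show Polynomial.hermite n = Polynomial.hermite (2 * r + (n - 2 * r)) by rw [← h1],
    Polynomial.coeff_hermite_explicit, show 2 * r + (n - 2 * r) = n by omega]
  have hA : ((2 * r).factorial : ℝ) = 2 ^ r * r.factorial * ((2 * r - 1)‼ : ℕ) := by
    rw [two_pow_mul_fact_mul_doubleFact]; push_cast; ring
  have hB : ((n.choose (n - 2 * r)) : ℝ) * (n - 2 * r).factorial * (n - (n - 2 * r)).factorial
      = n.factorial := by
    exact_mod_cast congrArg (Nat.cast (R := ℝ))
      (Nat.choose_mul_factorial_mul_factorial (by omega : n - 2 * r ≤ n))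
  have hB' : ((n.choose (n - 2 * r)) : ℝ) * (n - 2 * r).factorial * (2 * r).factorial
      = n.factorial := by
    rw [show n - (n - 2 * r) = 2 * r by omega] at hB; exact hB
  push_cast
  rw [eq_div_iff (by positivity)]
  rw [← hB', hA]
  ring

private lemma aeval_hermite_eq_sum (n : ℕ) (y : ℝ) :
    (Polynomial.aeval y (Polynomial.hermite n) : ℝ) =
      ∑ r ∈ Finset.range (n / 2 + 1),
        ((-1 : ℝ) ^ r * n.factorial / (r.factorial * (n - 2 * r).factorial * 2 ^ r))
          * y ^ (n - 2 * r) := by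
  rw [Polynomial.aeval_eq_sum_range (R := ℤ) (p := Polynomial.hermite n) y,
    Polynomial.natDegree_hermite]
  have step1 : ∑ i ∈ Finset.range (n + 1), (Polynomial.coeff (Polynomial.hermite n) i) • y ^ i
      = ∑ i ∈ (Finset.range (n + 1)).filter (fun i => (n + i) % 2 = 0),
          (Polynomial.coeff (Polynomial.hermite n) i) • y ^ i := by
    rw [Finset.sum_filter_of_ne]
    intro i _ hne
    by_contra hodd
    exact hne (by rw [Polynomial.coeff_hermite_of_odd_add (Nat.odd_iff.2 (by omega)), zero_smul])
  rw [step1]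
  refine Finset.sum_nbij' (i := fun i => (n - i) / 2) (j := fun r => n - 2 * r) ?_ ?_ ?_ ?_ ?_
  · intro i hi
    simp only [Finset.mem_filter, Finset.mem_range] at hi ⊢
    omega
  · intro r hr
    simp only [Finset.mem_filter, Finset.mem_range] at hr ⊢
    omega
  · intro i hi
    simp only [Finset.mem_filter, Finset.mem_range] at hi
    omega
  · intro r hr
    simp only [Finset.mem_range] at hr
    omega
  · intro i hi
    simp only [Finset.mem_filter, Finset.mem_range] at hi
    have h2 : 2 * ((n - i) / 2) ≤ n := by omega
    have heq : n - 2 * ((n - i) / 2) = i := by omega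
    rw [zsmul_eq_mul]
    conv_lhs => rw [← heq]
    rw [coeff_hermite_real n ((n - i) / 2) h2]

private lemma term_identity (t : ℝ) (ht : 0 < t) (n₁ n₂ n₃ r₁ r₂ r₃ M : ℕ)
    (hM : n₁ + n₂ + n₃ = 2 * M) (h₁ : 2 * r₁ ≤ n₁) (h₂ : 2 * r₂ ≤ n₂) (h₃ : 2 * r₃ ≤ n₃)
    (hRM : r₁ + r₂ + r₃ ≤ M) :
    ((((-1 : ℝ) ^ r₁ * n₁.factorial / (r₁.factorial * (n₁ - 2 * r₁).factorial * 2 ^ r₁))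
        * ((Real.sqrt (2 * t))⁻¹) ^ (n₁ - 2 * r₁)) *
     (((-1 : ℝ) ^ r₂ * n₂.factorial / (r₂.factorial * (n₂ - 2 * r₂).factorial * 2 ^ r₂))
        * ((Real.sqrt (2 * t))⁻¹) ^ (n₂ - 2 * r₂)) *
     (((-1 : ℝ) ^ r₃ * n₃.factorial / (r₃.factorial * (n₃ - 2 * r₃).factorial * 2 ^ r₃))
        * ((Real.sqrt (2 * t))⁻¹) ^ (n₃ - 2 * r₃)) *
     ((Real.sqrt (4 * π * t))⁻¹) ^ 3) *
      ((2 * (M - (r₁ + r₂ + r₃))).factorial /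
        ((M - (r₁ + r₂ + r₃)).factorial * (4 * (3 / (4 * t))) ^ (M - (r₁ + r₂ + r₃))) *
        Real.sqrt (π / (3 / (4 * t))))
    = (2 : ℝ) ^ (-((n₁ + n₂ + n₃ : ℕ) : ℝ) / 2) / (Real.sqrt 3 * (4 * π * t)) *
      (((-1 : ℝ) ^ r₁ * (3 : ℝ) ^ ((r₁ : ℝ) - (n₁ : ℝ) / 2) *
          (Nat.factorial n₁) / ((Nat.factorial r₁) * (Nat.factorial (n₁ - 2 * r₁)))) *
       ((-1 : ℝ) ^ r₂ * (3 : ℝ) ^ ((r₂ : ℝ) - (n₂ : ℝ) / 2) *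
          (Nat.factorial n₂) / ((Nat.factorial r₂) * (Nat.factorial (n₂ - 2 * r₂)))) *
       ((-1 : ℝ) ^ r₃ * (3 : ℝ) ^ ((r₃ : ℝ) - (n₃ : ℝ) / 2) *
          (Nat.factorial n₃) / ((Nat.factorial r₃) * (Nat.factorial (n₃ - 2 * r₃)))) *
       (Nat.factorial ((n₁ + n₂ + n₃) - 2 * (r₁ + r₂ + r₃))) /
       (Nat.factorial ((n₁ + n₂ + n₃) / 2 - (r₁ + r₂ + r₃)))) := by
  have ht2 : (0:ℝ) < 2 * t := by linarith
  have ht4 : (0:ℝ) < 4 * π * t := by positivity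
  set k := M - (r₁ + r₂ + r₃) with hk
  have hfk1 : (n₁ + n₂ + n₃) - 2 * (r₁ + r₂ + r₃) = 2 * k := by omega
  have hfk2 : (n₁ + n₂ + n₃) / 2 - (r₁ + r₂ + r₃) = k := by omega
  rw [hfk1, hfk2]
  -- power facts
  have hNcast : ((n₁ + n₂ + n₃ : ℕ) : ℝ) = 2 * (M : ℝ) := by exact_mod_cast hM
  have hkcast : (k : ℝ) = (M : ℝ) - ((r₁ : ℝ) + r₂ + r₃) := by
    rw [hk]; push_cast [Nat.cast_sub hRM]; ring
  have h2pow : (2 : ℝ) ^ (-((n₁ + n₂ + n₃ : ℕ) : ℝ) / 2) = ((2:ℝ) ^ M)⁻¹ := by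
    rw [show -((n₁ + n₂ + n₃ : ℕ) : ℝ) / 2 = -(M:ℝ) by rw [hNcast]; ring,
      Real.rpow_neg (by norm_num), Real.rpow_natCast]
  have h3pow : (3:ℝ) ^ ((r₁ : ℝ) - (n₁ : ℝ) / 2) * (3:ℝ) ^ ((r₂ : ℝ) - (n₂ : ℝ) / 2)
      * (3:ℝ) ^ ((r₃ : ℝ) - (n₃ : ℝ) / 2) = ((3:ℝ) ^ k)⁻¹ := by
    rw [← Real.rpow_add (by norm_num : (0:ℝ) < 3), ← Real.rpow_add (by norm_num : (0:ℝ) < 3),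
      show ((r₁ : ℝ) - (n₁ : ℝ) / 2) + ((r₂ : ℝ) - (n₂ : ℝ) / 2) + ((r₃ : ℝ) - (n₃ : ℝ) / 2)
        = -((k:ℕ):ℝ) by rw [hkcast]; push_cast at hNcast ⊢; linarith,
      Real.rpow_neg (by norm_num), Real.rpow_natCast]
  have hs2 : Real.sqrt (2 * t) ^ 2 = 2 * t := Real.sq_sqrt ht2.le
  have hSpow : ((Real.sqrt (2 * t))⁻¹) ^ (n₁ - 2 * r₁) * ((Real.sqrt (2 * t))⁻¹) ^ (n₂ - 2 * r₂)
      * ((Real.sqrt (2 * t))⁻¹) ^ (n₃ - 2 * r₃) = (((2 * t) : ℝ) ^ k)⁻¹ := by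
    rw [← pow_add, ← pow_add, show (n₁ - 2 * r₁) + (n₂ - 2 * r₂) + (n₃ - 2 * r₃) = 2 * k by omega,
      pow_mul, inv_pow, hs2, inv_pow]
  have hsq : Real.sqrt (π / (3 / (4 * t))) = Real.sqrt (4 * π * t) / Real.sqrt 3 := by
    rw [show π / (3 / (4 * t)) = (4 * π * t) / 3 from (by field_simp), Real.sqrt_div ht4.le 3]
  have h4a : ((4 * (3 / (4 * t)) : ℝ)) ^ k = 3 ^ k / t ^ k := by
    rw [show (4 * (3 / (4 * t)) : ℝ) = 3 / t from (by field_simp), div_pow]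
  have hB : ((Real.sqrt (4 * π * t))⁻¹) ^ 3 * Real.sqrt (4 * π * t) = (4 * π * t)⁻¹ := by
    have hs4 : Real.sqrt (4 * π * t) ^ 2 = 4 * π * t := Real.sq_sqrt ht4.le
    have hs4pos : (0:ℝ) < Real.sqrt (4 * π * t) := Real.sqrt_pos.2 ht4
    rw [inv_pow, show Real.sqrt (4 * π * t) ^ 3 = Real.sqrt (4 * π * t) ^ 2 * Real.sqrt (4 * π * t) by ring, hs4]
    field_simp
  have hMk : M = r₁ + r₂ + r₃ + k := by omega
  have hfac : ∀ m : ℕ, ((m.factorial : ℝ)) ≠ 0 := fun m => by positivity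
  have hs3 : Real.sqrt 3 ≠ 0 := by positivity
  have htk : (t : ℝ) ^ k ≠ 0 := by positivity
  calc
    _ = (((Real.sqrt (2 * t))⁻¹) ^ (n₁ - 2 * r₁) * ((Real.sqrt (2 * t))⁻¹) ^ (n₂ - 2 * r₂)
          * ((Real.sqrt (2 * t))⁻¹) ^ (n₃ - 2 * r₃)) *
        (((-1 : ℝ) ^ r₁ * n₁.factorial / (r₁.factorial * (n₁ - 2 * r₁).factorial * 2 ^ r₁)) *
         ((-1 : ℝ) ^ r₂ * n₂.factorial / (r₂.factorial * (n₂ - 2 * r₂).factorial * 2 ^ r₂)) *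
         ((-1 : ℝ) ^ r₃ * n₃.factorial / (r₃.factorial * (n₃ - 2 * r₃).factorial * 2 ^ r₃)) *
         (((Real.sqrt (4 * π * t))⁻¹) ^ 3 * Real.sqrt (4 * π * t)) *
         ((2 * k).factorial / (k.factorial * (4 * (3 / (4 * t))) ^ k) * (Real.sqrt 3)⁻¹)) := by
        rw [hsq]; ring
    _ = ((2 * t : ℝ) ^ k)⁻¹ *
        (((-1 : ℝ) ^ r₁ * n₁.factorial / (r₁.factorial * (n₁ - 2 * r₁).factorial * 2 ^ r₁)) *
         ((-1 : ℝ) ^ r₂ * n₂.factorial / (r₂.factorial * (n₂ - 2 * r₂).factorial * 2 ^ r₂)) *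
         ((-1 : ℝ) ^ r₃ * n₃.factorial / (r₃.factorial * (n₃ - 2 * r₃).factorial * 2 ^ r₃)) *
         ((4 * π * t)⁻¹) *
         ((2 * k).factorial / (k.factorial * (3 ^ k / t ^ k)) * (Real.sqrt 3)⁻¹)) := by
        rw [hSpow, hB, h4a]
    _ = _ := by
        rw [h2pow,
          show (((-1 : ℝ) ^ r₁ * (3 : ℝ) ^ ((r₁ : ℝ) - (n₁ : ℝ) / 2) *
              (Nat.factorial n₁) / ((Nat.factorial r₁) * (Nat.factorial (n₁ - 2 * r₁)))) *
           ((-1 : ℝ) ^ r₂ * (3 : ℝ) ^ ((r₂ : ℝ) - (n₂ : ℝ) / 2) *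
              (Nat.factorial n₂) / ((Nat.factorial r₂) * (Nat.factorial (n₂ - 2 * r₂)))) *
           ((-1 : ℝ) ^ r₃ * (3 : ℝ) ^ ((r₃ : ℝ) - (n₃ : ℝ) / 2) *
              (Nat.factorial n₃) / ((Nat.factorial r₃) * (Nat.factorial (n₃ - 2 * r₃)))) *
           (Nat.factorial (2 * k)) / (Nat.factorial k))
           = ((3:ℝ) ^ ((r₁ : ℝ) - (n₁ : ℝ) / 2) * (3:ℝ) ^ ((r₂ : ℝ) - (n₂ : ℝ) / 2)
              * (3:ℝ) ^ ((r₃ : ℝ) - (n₃ : ℝ) / 2)) *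
             (((-1 : ℝ) ^ r₁ * (Nat.factorial n₁) / ((Nat.factorial r₁) * (Nat.factorial (n₁ - 2 * r₁)))) *
              ((-1 : ℝ) ^ r₂ * (Nat.factorial n₂) / ((Nat.factorial r₂) * (Nat.factorial (n₂ - 2 * r₂)))) *
              ((-1 : ℝ) ^ r₃ * (Nat.factorial n₃) / ((Nat.factorial r₃) * (Nat.factorial (n₃ - 2 * r₃)))) *
              (Nat.factorial (2 * k)) / (Nat.factorial k)) from by ring,
          h3pow, hMk]
        have h3k : ((3:ℝ) ^ k) ≠ 0 := by positivity
        field_simp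
        ring

end aux

/-- Carlitz-type formula: for `n₁ + n₂ + n₃` even and `t > 0`,
`∫ ∏_j H_{n_j}(x/√(2t)) G(t,x)³ dx` equals the stated triple sum, where the sum
ranges over nonnegative `r_j` with `2 r_j ≤ n_j`. -/
theorem stmt_17 (n₁ n₂ n₃ : ℕ) (h : Even (n₁ + n₂ + n₃)) (t : ℝ) (ht : 0 < t) :
    ∫ x : ℝ,
        (Polynomial.aeval (x / Real.sqrt (2 * t)) (Polynomial.hermite n₁)) *
        (Polynomial.aeval (x / Real.sqrt (2 * t)) (Polynomial.hermite n₂)) *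
        (Polynomial.aeval (x / Real.sqrt (2 * t)) (Polynomial.hermite n₃)) *
        (heatK t x) ^ 3
      = (2 : ℝ) ^ (-((n₁ + n₂ + n₃ : ℕ) : ℝ) / 2) / (Real.sqrt 3 * (4 * Real.pi * t)) *
        ∑ r₁ ∈ Finset.range (n₁ / 2 + 1), ∑ r₂ ∈ Finset.range (n₂ / 2 + 1),
          ∑ r₃ ∈ Finset.range (n₃ / 2 + 1),
          (((-1 : ℝ) ^ r₁ * (3 : ℝ) ^ ((r₁ : ℝ) - (n₁ : ℝ) / 2) *
              (Nat.factorial n₁) / ((Nat.factorial r₁) * (Nat.factorial (n₁ - 2 * r₁)))) *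
           ((-1 : ℝ) ^ r₂ * (3 : ℝ) ^ ((r₂ : ℝ) - (n₂ : ℝ) / 2) *
              (Nat.factorial n₂) / ((Nat.factorial r₂) * (Nat.factorial (n₂ - 2 * r₂)))) *
           ((-1 : ℝ) ^ r₃ * (3 : ℝ) ^ ((r₃ : ℝ) - (n₃ : ℝ) / 2) *
              (Nat.factorial n₃) / ((Nat.factorial r₃) * (Nat.factorial (n₃ - 2 * r₃)))) *
           (Nat.factorial ((n₁ + n₂ + n₃) - 2 * (r₁ + r₂ + r₃))) /
           (Nat.factorial ((n₁ + n₂ + n₃) / 2 - (r₁ + r₂ + r₃)))) := by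
  obtain ⟨M, hMM⟩ := h
  have hM : n₁ + n₂ + n₃ = 2 * M := by omega
  have ha : (0:ℝ) < 3 / (4 * t) := by positivity
  have hherm : ∀ (n : ℕ) (x : ℝ),
      (Polynomial.aeval (x / Real.sqrt (2 * t)) (Polynomial.hermite n) : ℝ)
      = ∑ r ∈ Finset.range (n / 2 + 1),
          (((-1:ℝ) ^ r * n.factorial / (r.factorial * (n - 2 * r).factorial * 2 ^ r))
            * ((Real.sqrt (2 * t))⁻¹) ^ (n - 2 * r)) * x ^ (n - 2 * r) := by
    intro n x
    rw [aeval_hermite_eq_sum]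
    refine Finset.sum_congr rfl fun r _ => ?_
    rw [div_pow, inv_pow]
    ring
  have hheat : ∀ x : ℝ, heatK t x ^ 3
      = ((Real.sqrt (4 * π * t))⁻¹) ^ 3 * Real.exp (-(3 / (4 * t)) * x ^ 2) := by
    intro x
    rw [heatK, if_pos ht, mul_pow]
    congr 1
    rw [← Real.exp_nat_mul]
    congr 1
    push_cast
    field_simp
  calc
    ∫ x : ℝ,
        (Polynomial.aeval (x / Real.sqrt (2 * t)) (Polynomial.hermite n₁)) *
        (Polynomial.aeval (x / Real.sqrt (2 * t)) (Polynomial.hermite n₂)) *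
        (Polynomial.aeval (x / Real.sqrt (2 * t)) (Polynomial.hermite n₃)) *
        (heatK t x) ^ 3
      = ∫ x : ℝ, ∑ r₁ ∈ Finset.range (n₁ / 2 + 1), ∑ r₂ ∈ Finset.range (n₂ / 2 + 1),
          ∑ r₃ ∈ Finset.range (n₃ / 2 + 1),
          ((((-1:ℝ) ^ r₁ * n₁.factorial / (r₁.factorial * (n₁ - 2 * r₁).factorial * 2 ^ r₁))
              * ((Real.sqrt (2 * t))⁻¹) ^ (n₁ - 2 * r₁)) *
           (((-1:ℝ) ^ r₂ * n₂.factorial / (r₂.factorial * (n₂ - 2 * r₂).factorial * 2 ^ r₂))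
              * ((Real.sqrt (2 * t))⁻¹) ^ (n₂ - 2 * r₂)) *
           (((-1:ℝ) ^ r₃ * n₃.factorial / (r₃.factorial * (n₃ - 2 * r₃).factorial * 2 ^ r₃))
              * ((Real.sqrt (2 * t))⁻¹) ^ (n₃ - 2 * r₃)) *
           ((Real.sqrt (4 * π * t))⁻¹) ^ 3) *
          (x ^ ((n₁ - 2 * r₁) + (n₂ - 2 * r₂) + (n₃ - 2 * r₃)) *
            Real.exp (-(3 / (4 * t)) * x ^ 2)) := by
        refine integral_congr_ae (Filter.Eventually.of_forall fun x => ?_)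
        dsimp only
        rw [hherm n₁ x, hherm n₂ x, hherm n₃ x, hheat x]
        rw [Finset.sum_mul_sum, Finset.sum_mul_sum, Finset.sum_mul]
        refine Finset.sum_congr rfl fun r₁ _ => ?_
        simp only [Finset.sum_mul]
        rw [Finset.sum_comm]
        refine Finset.sum_congr rfl fun r₂ _ => ?_
        refine Finset.sum_congr rfl fun r₃ _ => ?_
        rw [pow_add, pow_add]
        ring
    _ = ∑ r₁ ∈ Finset.range (n₁ / 2 + 1), ∑ r₂ ∈ Finset.range (n₂ / 2 + 1),
          ∑ r₃ ∈ Finset.range (n₃ / 2 + 1),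
          ((((-1:ℝ) ^ r₁ * n₁.factorial / (r₁.factorial * (n₁ - 2 * r₁).factorial * 2 ^ r₁))
              * ((Real.sqrt (2 * t))⁻¹) ^ (n₁ - 2 * r₁)) *
           (((-1:ℝ) ^ r₂ * n₂.factorial / (r₂.factorial * (n₂ - 2 * r₂).factorial * 2 ^ r₂))
              * ((Real.sqrt (2 * t))⁻¹) ^ (n₂ - 2 * r₂)) *
           (((-1:ℝ) ^ r₃ * n₃.factorial / (r₃.factorial * (n₃ - 2 * r₃).factorial * 2 ^ r₃))
              * ((Real.sqrt (2 * t))⁻¹) ^ (n₃ - 2 * r₃)) *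
           ((Real.sqrt (4 * π * t))⁻¹) ^ 3) *
          ∫ x : ℝ, x ^ ((n₁ - 2 * r₁) + (n₂ - 2 * r₂) + (n₃ - 2 * r₃)) *
            Real.exp (-(3 / (4 * t)) * x ^ 2) := by
        rw [integral_finset_sum _ (fun r₁ _ => integrable_finset_sum _ (fun r₂ _ =>
          integrable_finset_sum _ (fun r₃ _ =>
            (integrable_pow_mul_exp ha _).const_mul _)))]
        refine Finset.sum_congr rfl fun r₁ _ => ?_
        rw [integral_finset_sum _ (fun r₂ _ => integrable_finset_sum _ (fun r₃ _ =>
          (integrable_pow_mul_exp ha _).const_mul _))]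
        refine Finset.sum_congr rfl fun r₂ _ => ?_
        rw [integral_finset_sum _ (fun r₃ _ => (integrable_pow_mul_exp ha _).const_mul _)]
        refine Finset.sum_congr rfl fun r₃ _ => ?_
        rw [integral_const_mul]
    _ = _ := by
        simp only [Finset.mul_sum]
        refine Finset.sum_congr rfl fun r₁ hr₁ => ?_
        refine Finset.sum_congr rfl fun r₂ hr₂ => ?_
        refine Finset.sum_congr rfl fun r₃ hr₃ => ?_
        rw [Finset.mem_range] at hr₁ hr₂ hr₃
        have h₁ : 2 * r₁ ≤ n₁ := by omega
        have h₂ : 2 * r₂ ≤ n₂ := by omega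
        have h₃ : 2 * r₃ ≤ n₃ := by omega
        have hRM : r₁ + r₂ + r₃ ≤ M := by omega
        rw [show (n₁ - 2 * r₁) + (n₂ - 2 * r₂) + (n₃ - 2 * r₃)
            = 2 * (M - (r₁ + r₂ + r₃)) by omega,
          integral_pow_mul_exp ha (M - (r₁ + r₂ + r₃))]
        exact term_identity t ht n₁ n₂ n₃ r₁ r₂ r₃ M hM h₁ h₂ h₃ hRM
end
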